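/- Let G be a group with a Rota-Baxter operator 𝓑: G → G of weight 1, i.e. 𝓑(g)𝓑(h) = 𝓑(g·𝓑(g)h𝓑(g)⁻¹) for all g, h ∈ G. Then the maps F₋, F₊: Gr(𝓑) → G defined on the graph subgroup by F₋(𝓑(g), g) = 𝓑(g) and F₊(𝓑(g), g) = g·𝓑(g) are group homomorphisms. -/
import Mathlib


/-- For a Rota-Baxter group `(G, 𝓑)` of weight 1, the maps
`F₋(𝓑 g, g) = 𝓑 g` and `F₊(𝓑 g, g) = g · 𝓑 g` on the graph subgroup
`Gr(𝓑) ⊆ G ⋉_Ad G` are group homomorphisms.  We identify `Gr(𝓑)` with `G`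
via `g ↦ (𝓑 g, g)`; the graph product becomes
`p g₁ g₂ = g₁ · 𝓑(g₁) g₂ 𝓑(g₁)⁻¹`, and the claims read
`𝓑 (p g₁ g₂) = 𝓑 g₁ · 𝓑 g₂` and
`p g₁ g₂ · 𝓑 (p g₁ g₂) = (g₁ · 𝓑 g₁) · (g₂ · 𝓑 g₂)`. -/
theorem graph_group_factorization_homs
    {G : Type*} [Group G] (𝓑 : G → G)
    (h𝓑 : ∀ g h : G, 𝓑 g * 𝓑 h = 𝓑 (g * (𝓑 g * h * (𝓑 g)⁻¹)))
    (p : G → G → G)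
    (hp : ∀ g₁ g₂ : G, p g₁ g₂ = g₁ * (𝓑 g₁ * g₂ * (𝓑 g₁)⁻¹)) :
    (∀ g₁ g₂ : G, 𝓑 (p g₁ g₂) = 𝓑 g₁ * 𝓑 g₂) ∧
    (∀ g₁ g₂ : G, p g₁ g₂ * 𝓑 (p g₁ g₂) = (g₁ * 𝓑 g₁) * (g₂ * 𝓑 g₂)) := by
  have h1 : ∀ g₁ g₂ : G, 𝓑 (p g₁ g₂) = 𝓑 g₁ * 𝓑 g₂ := fun g₁ g₂ => by
    rw [hp, ← h𝓑]
  refine ⟨h1, fun g₁ g₂ => ?_⟩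
  rw [h1, hp]
  group
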